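/- Let p be an odd prime and k ≥ 1, and set m = p^(k−1). Let Λ = (A_{p−1})^m be the orthogonal direct sum of m copies of A_{p−1}, and define σ_{p^k} : Λ → Λ by σ_{p^k}(v₁, v₂, …, v_m) := (σ(v_m), v₁, …, v_{m−1}), where σ is the cyclic shift on A_{p−1}. Then σ_{p^k} preserves the inner product of Λ, has order exactly p^k, and for every integer ℓ with 0 < ℓ < p^k, the only v ∈ Λ with σ_{p^k}^ℓ(v) = v is v = 0. -/

import Mathlib

/-- The cyclic shift `σ(u₁,…,u_p) = (u_p, u₁, …, u_{p−1})` on `ℤᵖ`. -/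
def cycShift (p : ℕ) (u : Fin p → ℤ) : Fin p → ℤ :=
  fun i => u ((finRotate p).symm i)

/-- The map `σ_{p^k}(v₁, …, v_m) = (σ(v_m), v₁, …, v_{m−1})` on `(ℤᵖ)ᵐ`. -/
def bigShift (p m : ℕ) (v : Fin m → Fin p → ℤ) : Fin m → Fin p → ℤ :=
  fun i =>
    if (i : ℕ) = 0 then cycShift p (v ((finRotate m).symm i))
    else v ((finRotate m).symm i)

lemma qr_mod (m q s : ℕ) (hs : s < m) : (m * q + s) % m = s := by
  rw [Nat.mul_add_mod]; exact Nat.mod_eq_of_lt hs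

lemma qr_div (m q s : ℕ) (hm : 0 < m) (hs : s < m) : (m * q + s) / m = q := by
  rw [Nat.mul_add_div hm, Nat.div_eq_of_lt hs, Nat.add_zero]

lemma rot0 (m : ℕ) (hm : 0 < m) : (0 + (m - 1)) % m = m - 1 := by
  rw [Nat.zero_add]; exact Nat.mod_eq_of_lt (by omega)

lemma rot1 (m r : ℕ) (h1 : 1 ≤ r) (h2 : r < m) : (r + (m - 1)) % m = r - 1 := by
  have h : r + (m - 1) = (r - 1) + m := by omega
  rw [h, Nat.add_mod_right]; exact Nat.mod_eq_of_lt (by omega)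

lemma finRotate_symm_mk (n : ℕ) (hn : 0 < n) (j : Fin n) :
    (finRotate n).symm j = ⟨(j.val + (n - 1)) % n, Nat.mod_lt _ hn⟩ := by
  obtain ⟨n', rfl⟩ := Nat.exists_eq_succ_of_ne_zero hn.ne'
  rw [Equiv.symm_apply_eq, finRotate_succ_apply]
  apply Fin.ext
  simp only [Fin.add_def, Fin.val_mk, Fin.val_one', Nat.succ_sub_one]
  rw [← Nat.add_mod]
  have h : j.val + n' + 1 = j.val + (n' + 1) := by omega
  rw [h, Nat.add_mod_right, Nat.mod_eq_of_lt j.isLt]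

def tZ (p m : ℕ) (hp : 0 < p) (hm : 0 < m) (v : Fin m → Fin p → ℤ)
    (x : ZMod (p * m)) : ℤ :=
  haveI : NeZero (p * m) := ⟨(Nat.mul_pos hp hm).ne'⟩
  v ⟨x.val % m, Nat.mod_lt _ hm⟩
    ⟨x.val / m, (Nat.div_lt_iff_lt_mul hm).mpr x.val_lt⟩

lemma tZ_apply (p m : ℕ) (hp : 0 < p) (hm : 0 < m) (v : Fin m → Fin p → ℤ)
    (i : Fin m) (j : Fin p) :
    tZ p m hp hm v ((i.val + m * j.val : ℕ) : ZMod (p * m)) = v i j := by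
  haveI : NeZero (p * m) := ⟨(Nat.mul_pos hp hm).ne'⟩
  have hmp : m * (p - 1) + m = m * p := by
    rw [← Nat.mul_succ]; congr 1; omega
  have h1 : m * j.val ≤ m * (p - 1) := Nat.mul_le_mul_left m (by omega)
  have h3 : m * p = p * m := mul_comm m p
  have hlt : i.val + m * j.val < p * m := by
    have := i.isLt; omega
  have hv : ((i.val + m * j.val : ℕ) : ZMod (p * m)).val = i.val + m * j.val :=
    ZMod.val_natCast_of_lt hlt
  simp only [tZ, hv]
  have e1 : (i.val + m * j.val) % m = i.val := by
    rw [Nat.add_comm]; exact qr_mod m j.val i.val i.isLt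
  have e2 : (i.val + m * j.val) / m = j.val := by
    rw [Nat.add_comm]; exact qr_div m j.val i.val hm i.isLt
  exact congrArg₂ v (Fin.ext e1) (Fin.ext e2)

lemma tZ_bigShift (p m : ℕ) (hp : 0 < p) (hm : 0 < m) (v : Fin m → Fin p → ℤ)
    (x : ZMod (p * m)) :
    tZ p m hp hm (bigShift p m v) x = tZ p m hp hm v (x - 1) := by
  haveI : NeZero (p * m) := ⟨(Nat.mul_pos hp hm).ne'⟩
  have hN : 0 < p * m := Nat.mul_pos hp hm
  have ha : x.val < p * m := x.val_lt
  have hx1 : x - 1 = x + ((p * m - 1 : ℕ) : ZMod (p * m)) := by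
    have h1 : ((p * m - 1 : ℕ) : ZMod (p * m)) = -1 := by
      rw [Nat.cast_sub (by omega : 1 ≤ p * m), ZMod.natCast_self, Nat.cast_one]
      ring
    rw [h1]; ring
  have hb : (x - 1).val = (x.val + (p * m - 1)) % (p * m) := by
    rw [hx1, ZMod.val_add, ZMod.val_natCast_of_lt (by omega)]
  have key : m * (x.val / m) + x.val % m = x.val := Nat.div_add_mod x.val m
  have hrm : x.val % m < m := Nat.mod_lt _ hm
  have hqp : x.val / m < p := (Nat.div_lt_iff_lt_mul hm).mpr (by omega)
  simp only [tZ, bigShift, finRotate_symm_mk m hm]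
  by_cases h0 : x.val % m = 0
  · rw [if_pos (by simpa using h0)]
    simp only [cycShift, finRotate_symm_mk p hp]
    rcases Nat.eq_zero_or_pos x.val with ha0 | ha1
    · -- x.val = 0, b = p*m - 1
      have hq0 : x.val / m = 0 := by rw [ha0, Nat.zero_div]
      have hb1 : (x - 1).val = p * m - 1 := by
        rw [hb, ha0, Nat.zero_add, Nat.mod_eq_of_lt (by omega)]
      have hmp : m * (p - 1) + m = m * p := by rw [← Nat.mul_succ]; congr 1; omega
      have h3 : m * p = p * m := mul_comm m p
      have hbe : (x - 1).val = m * (p - 1) + (m - 1) := by omega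
      have ebm : (x - 1).val % m = m - 1 := by rw [hbe]; exact qr_mod _ _ _ (by omega)
      have ebd : (x - 1).val / m = p - 1 := by rw [hbe]; exact qr_div _ _ _ hm (by omega)
      refine congrArg₂ v (Fin.ext ?_) (Fin.ext ?_)
      · simp only [Fin.val_mk, h0, ebm]; exact rot0 m hm
      · simp only [Fin.val_mk, hq0, ebd]; exact rot0 p hp
    · -- x.val ≥ 1, x.val % m = 0
      have hq1 : 1 ≤ x.val / m := by
        rcases Nat.eq_zero_or_pos (x.val / m) with h | h
        · exfalso; rw [h, Nat.mul_zero] at key; omega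
        · exact h
      have hb1 : (x - 1).val = x.val - 1 := by
        rw [hb]
        have h : x.val + (p * m - 1) = (x.val - 1) + p * m := by omega
        rw [h, Nat.add_mod_right, Nat.mod_eq_of_lt (by omega)]
      have hmq : m * (x.val / m - 1) + m = m * (x.val / m) := by
        rw [← Nat.mul_succ]; congr 1; omega
      have hbe : (x - 1).val = m * (x.val / m - 1) + (m - 1) := by omega
      have ebm : (x - 1).val % m = m - 1 := by rw [hbe]; exact qr_mod _ _ _ (by omega)
      have ebd : (x - 1).val / m = x.val / m - 1 := by
        rw [hbe]; exact qr_div _ _ _ hm (by omega)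
      refine congrArg₂ v (Fin.ext ?_) (Fin.ext ?_)
      · simp only [Fin.val_mk, h0, ebm]; exact rot0 m hm
      · simp only [Fin.val_mk, ebd]; exact rot1 p _ hq1 hqp
  · rw [if_neg (by simpa using h0)]
    have hb1 : (x - 1).val = x.val - 1 := by
      rw [hb]
      have h : x.val + (p * m - 1) = (x.val - 1) + p * m := by omega
      rw [h, Nat.add_mod_right, Nat.mod_eq_of_lt (by omega)]
    have hbe : (x - 1).val = m * (x.val / m) + (x.val % m - 1) := by omega
    have ebm : (x - 1).val % m = x.val % m - 1 := by
      rw [hbe]; exact qr_mod _ _ _ (by omega)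
    have ebd : (x - 1).val / m = x.val / m := by
      rw [hbe]; exact qr_div _ _ _ hm (by omega)
    refine congrArg₂ v (Fin.ext ?_) (Fin.ext ?_)
    · simp only [Fin.val_mk, ebm]; exact rot1 m _ (by omega) hrm
    · simp only [Fin.val_mk, ebd]

lemma tZ_iterate (p m : ℕ) (hp : 0 < p) (hm : 0 < m) (v : Fin m → Fin p → ℤ)
    (ℓ : ℕ) (x : ZMod (p * m)) :
    tZ p m hp hm ((bigShift p m)^[ℓ] v) x = tZ p m hp hm v (x - (ℓ : ZMod (p * m))) := by
  induction ℓ generalizing x with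
  | zero => simp
  | succ n ih =>
    rw [Function.iterate_succ_apply', tZ_bigShift, ih]
    congr 1
    push_cast
    ring

lemma tZ_inj (p m : ℕ) (hp : 0 < p) (hm : 0 < m) (v w : Fin m → Fin p → ℤ)
    (h : ∀ x, tZ p m hp hm v x = tZ p m hp hm w x) : v = w := by
  funext i j
  have := h ((i.val + m * j.val : ℕ) : ZMod (p * m))
  rwa [tZ_apply, tZ_apply] at this

lemma fixed_eq_zero (p m : ℕ) (hp : 0 < p) (hm : 0 < m) (ℓ : ℕ) (hℓ : 0 < ℓ)
    (hd : Nat.gcd ℓ (p * m) ∣ m) (v : Fin m → Fin p → ℤ)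
    (hsum : ∀ i, ∑ j, v i j = 0) (hfix : (bigShift p m)^[ℓ] v = v) : v = 0 := by
  haveI : NeZero (p * m) := ⟨(Nat.mul_pos hp hm).ne'⟩
  haveI : NeZero p := ⟨hp.ne'⟩
  set d := Nat.gcd ℓ (p * m)
  have hW1 : ∀ x, tZ p m hp hm v (x - (ℓ : ZMod (p * m))) = tZ p m hp hm v x := by
    intro x
    conv_rhs => rw [← hfix]
    rw [tZ_iterate]
  have step : ∀ c : ℕ, ∀ x,
      tZ p m hp hm v (x - (c : ZMod (p * m)) * (ℓ : ZMod (p * m))) = tZ p m hp hm v x := by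
    intro c
    induction c with
    | zero => intro x; simp
    | succ n ih =>
      intro x
      have h1 : x - ((n + 1 : ℕ) : ZMod (p * m)) * (ℓ : ZMod (p * m)) =
          (x - (ℓ : ZMod (p * m))) - (n : ZMod (p * m)) * (ℓ : ZMod (p * m)) := by
        push_cast; ring
      rw [h1, ih, hW1]
  have hbez : ∃ c : ℕ, (c : ZMod (p * m)) * (ℓ : ZMod (p * m)) = (d : ZMod (p * m)) := by
    have h := Nat.gcd_eq_gcd_ab ℓ (p * m)
    set u : ZMod (p * m) := ((Nat.gcdA ℓ (p * m) : ℤ) : ZMod (p * m)) with hu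
    refine ⟨u.val, ?_⟩
    rw [ZMod.natCast_rightInverse u]
    have h3 : ((d : ℕ) : ZMod (p * m)) =
        (((ℓ : ℤ) * Nat.gcdA ℓ (p * m) + ((p * m : ℕ) : ℤ) * Nat.gcdB ℓ (p * m) : ℤ) :
          ZMod (p * m)) := by
      rw [← h]; push_cast; rfl
    rw [h3]
    push_cast
    rw [show ((p : ZMod (p * m)) * (m : ZMod (p * m))) = 0 from by
      rw [← Nat.cast_mul, ZMod.natCast_self]]
    rw [hu]
    ring
  obtain ⟨c, hc⟩ := hbez
  have hWd : ∀ x, tZ p m hp hm v (x - (d : ZMod (p * m))) = tZ p m hp hm v x := by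
    intro x; rw [← hc]; exact step c x
  have stepd : ∀ t : ℕ, ∀ x,
      tZ p m hp hm v (x - (t : ZMod (p * m)) * (d : ZMod (p * m))) = tZ p m hp hm v x := by
    intro t
    induction t with
    | zero => intro x; simp
    | succ n ih =>
      intro x
      have h1 : x - ((n + 1 : ℕ) : ZMod (p * m)) * (d : ZMod (p * m)) =
          (x - (d : ZMod (p * m))) - (n : ZMod (p * m)) * (d : ZMod (p * m)) := by
        push_cast; ring
      rw [h1, ih, hWd]
  have hconst : ∀ (i : Fin m) (j : Fin p), v i j = v i 0 := by
    intro i j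
    have e1 : v i j = tZ p m hp hm v ((i.val + m * j.val : ℕ) : ZMod (p * m)) :=
      (tZ_apply p m hp hm v i j).symm
    have e0 : v i 0 = tZ p m hp hm v ((i.val : ℕ) : ZMod (p * m)) := by
      have := (tZ_apply p m hp hm v i 0).symm
      simpa using this
    have htd : (m / d * j.val) * d = m * j.val := by
      rw [mul_comm (m / d) j.val, mul_assoc, Nat.div_mul_cancel hd, mul_comm j.val m]
    have hx : ((i.val + m * j.val : ℕ) : ZMod (p * m)) =
        ((i.val : ℕ) : ZMod (p * m)) +
          ((m / d * j.val : ℕ) : ZMod (p * m)) * (d : ZMod (p * m)) := by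
      rw [show ((m / d * j.val : ℕ) : ZMod (p * m)) * ((d : ℕ) : ZMod (p * m)) =
          (((m / d * j.val) * d : ℕ) : ZMod (p * m)) from by push_cast; ring, htd]
      push_cast; ring
    rw [e1, e0, hx]
    have := stepd (m / d * j.val) (((i.val : ℕ) : ZMod (p * m)) +
      ((m / d * j.val : ℕ) : ZMod (p * m)) * (d : ZMod (p * m)))
    rw [add_sub_cancel_right] at this
    exact this.symm
  funext i j
  have h0 : (p : ℤ) * v i 0 = 0 := by
    have hs := hsum i
    rw [Finset.sum_congr rfl (fun j _ => hconst i j)] at hs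
    simpa [Finset.sum_const, mul_comm] using hs
  have hz : v i 0 = 0 := by
    rcases mul_eq_zero.mp h0 with h | h
    · exact absurd h (by exact_mod_cast hp.ne')
    · exact h
  simp [hconst i j, hz]

lemma bigShift_rowsum (p m : ℕ) (v : Fin m → Fin p → ℤ) (hv : ∀ i, ∑ j, v i j = 0)
    (i : Fin m) : ∑ j, bigShift p m v i j = 0 := by
  by_cases hi : (i : ℕ) = 0
  · simp only [bigShift, cycShift, if_pos hi]
    rw [Equiv.sum_comp (finRotate p).symm (v ((finRotate m).symm i))]
    exact hv _
  · simp only [bigShift, if_neg hi]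
    exact hv _

lemma bigShift_inner (p m : ℕ) (v w : Fin m → Fin p → ℤ) :
    ∑ i, ∑ j, bigShift p m v i j * bigShift p m w i j = ∑ i, ∑ j, v i j * w i j := by
  have hrow : ∀ i, ∑ j, bigShift p m v i j * bigShift p m w i j =
      ∑ j, v ((finRotate m).symm i) j * w ((finRotate m).symm i) j := by
    intro i
    by_cases hi : (i : ℕ) = 0
    · simp only [bigShift, cycShift, if_pos hi]
      exact Equiv.sum_comp (finRotate p).symm
        (fun j => v ((finRotate m).symm i) j * w ((finRotate m).symm i) j)
    · simp only [bigShift, if_neg hi]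
  rw [Finset.sum_congr rfl (fun i _ => hrow i)]
  exact Equiv.sum_comp (finRotate m).symm
    (fun i => ∑ j, v i j * w i j)

theorem stmt12 (p k : ℕ) (hp : p.Prime) (hodd : Odd p) (hk : 1 ≤ k) :
    -- σ_{p^k} maps Λ = (A_{p-1})^{p^{k-1}} to itself
    (∀ v : Fin (p ^ (k - 1)) → Fin p → ℤ, (∀ i, ∑ j, v i j = 0) →
      ∀ i, ∑ j, bigShift p (p ^ (k - 1)) v i j = 0) ∧
    -- σ_{p^k} preserves the inner product of Λ
    (∀ v w : Fin (p ^ (k - 1)) → Fin p → ℤ,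
      (∀ i, ∑ j, v i j = 0) → (∀ i, ∑ j, w i j = 0) →
      ∑ i, ∑ j, bigShift p (p ^ (k - 1)) v i j * bigShift p (p ^ (k - 1)) w i j =
        ∑ i, ∑ j, v i j * w i j) ∧
    -- σ_{p^k}^{p^k} = id on Λ
    (∀ v : Fin (p ^ (k - 1)) → Fin p → ℤ, (∀ i, ∑ j, v i j = 0) →
      (bigShift p (p ^ (k - 1)))^[p ^ k] v = v) ∧
    -- σ_{p^k} has order exactly p^k on Λ
    (∀ ℓ : ℕ, 0 < ℓ → ℓ < p ^ k →
      ∃ v : Fin (p ^ (k - 1)) → Fin p → ℤ, (∀ i, ∑ j, v i j = 0) ∧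
        (bigShift p (p ^ (k - 1)))^[ℓ] v ≠ v) ∧
    -- every nontrivial power of σ_{p^k} is fixed-point free on Λ
    (∀ ℓ : ℕ, 0 < ℓ → ℓ < p ^ k →
      ∀ v : Fin (p ^ (k - 1)) → Fin p → ℤ, (∀ i, ∑ j, v i j = 0) →
        (bigShift p (p ^ (k - 1)))^[ℓ] v = v → v = 0) := by
  have hp0 : 0 < p := hp.pos
  have hm : 0 < p ^ (k - 1) := pow_pos hp0 _
  have hN : p * p ^ (k - 1) = p ^ k := by
    rw [← pow_succ']
    congr 1
    omega
  haveI : NeZero p := ⟨hp0.ne'⟩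
  haveI : NeZero (p ^ (k - 1)) := ⟨hm.ne'⟩
  -- part 5 (used also for part 4)
  have P5 : ∀ ℓ : ℕ, 0 < ℓ → ℓ < p ^ k →
      ∀ v : Fin (p ^ (k - 1)) → Fin p → ℤ, (∀ i, ∑ j, v i j = 0) →
        (bigShift p (p ^ (k - 1)))^[ℓ] v = v → v = 0 := by
    intro ℓ h1 h2 v hs hfix
    have hd : Nat.gcd ℓ (p * p ^ (k - 1)) ∣ p ^ (k - 1) := by
      have hdk : Nat.gcd ℓ (p * p ^ (k - 1)) ∣ p ^ k := by
        rw [← hN]; exact Nat.gcd_dvd_right _ _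
      obtain ⟨i, hik, hdi⟩ := (Nat.dvd_prime_pow hp).mp hdk
      have hdl : Nat.gcd ℓ (p * p ^ (k - 1)) ∣ ℓ := Nat.gcd_dvd_left _ _
      have hle : Nat.gcd ℓ (p * p ^ (k - 1)) ≤ ℓ := Nat.le_of_dvd h1 hdl
      have hik' : i ≤ k - 1 := by
        by_contra hcon
        have : i = k := by omega
        subst this
        rw [hdi] at hle
        omega
      rw [hdi]
      exact pow_dvd_pow p hik'
    exact fixed_eq_zero p (p ^ (k - 1)) hp0 hm ℓ h1 hd v hs hfix
  refine ⟨fun v hv i => bigShift_rowsum p _ v hv i,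
    fun v w _ _ => bigShift_inner p _ v w, ?_, ?_, P5⟩
  · -- order divides p^k
    intro v _
    apply tZ_inj p (p ^ (k - 1)) hp0 hm
    intro x
    rw [tZ_iterate]
    congr 1
    have : ((p ^ k : ℕ) : ZMod (p * p ^ (k - 1))) = 0 := by
      rw [← hN, ZMod.natCast_self]
    rw [this, sub_zero]
  · -- order exactly p^k
    intro ℓ h1 h2
    have hp1 : 1 < p := hp.one_lt
    set j0 : Fin p := ⟨0, hp0⟩ with hj0
    set j1 : Fin p := ⟨1, hp1⟩ with hj1
    have hj01 : j0 ≠ j1 := by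
      intro h
      have := congrArg Fin.val h
      simp [hj0, hj1] at this
    set v : Fin (p ^ (k - 1)) → Fin p → ℤ := fun i j =>
      if i = 0 then (if j = j0 then 1 else 0) + (if j = j1 then -1 else 0) else 0 with hvdef
    have hsum : ∀ i, ∑ j, v i j = 0 := by
      intro i
      by_cases hi : i = 0
      · simp only [hvdef, if_pos hi, Finset.sum_add_distrib,
          Finset.sum_ite_eq' Finset.univ, Finset.mem_univ, if_true]
        ring
      · simp [hvdef, hi]
    have hv1 : v 0 j0 = 1 := by
      simp [hvdef, hj01]
    refine ⟨v, hsum, fun hfix => ?_⟩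
    have := P5 ℓ h1 h2 v hsum hfix
    rw [this] at hv1
    simp at hv1
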